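/- Let (f̄_n)_{n≥1} be a sequence of positive real numbers such that f̄_n → 1, ∑_{n=1}^∞ (1 − f̄_n)_+ = ∞, and ∑_{n=1}^∞ (f̄_n − 1)_+ < ∞. Then there exists a nondecreasing sequence A : ℕ → ℕ with A(n) → ∞ such that n · ∏_{j=1}^{A(n)} f̄_j → 1 as n → ∞. -/

import Mathlib

open Filter Finset


theorem stmt0 (fbar : ℕ → ℝ)
    (hpos : ∀ n, 1 ≤ n → 0 < fbar n)
    (hlim : Tendsto fbar atTop (nhds 1))
    (hdiv : ¬ Summable (fun n => max (1 - fbar n) 0))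
    (hsum : Summable (fun n => max (fbar n - 1) 0)) :
    ∃ A : ℕ → ℕ, Monotone A ∧ Tendsto A atTop atTop ∧
      Tendsto (fun n : ℕ => (n : ℝ) * ∏ j ∈ Finset.Icc 1 (A n), fbar j) atTop (nhds 1) := by
  set g : ℕ → ℝ := fun i => fbar (i + 1) with hgdef
  have hgpos : ∀ i, 0 < g i := fun i => hpos (i + 1) (Nat.succ_le_succ (Nat.zero_le i))
  set Q : ℕ → ℝ := fun m => ∏ i ∈ Finset.range m, g i with hQdef
  have hPQ : ∀ m, ∏ j ∈ Finset.Icc 1 m, fbar j = Q m := by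
    intro m
    rw [← Finset.Ico_add_one_right_eq_Icc, Finset.prod_Ico_eq_prod_range]
    simp [hgdef, add_comm]
    rfl
  have hQpos : ∀ m, 0 < Q m := fun m => Finset.prod_pos (fun i _ => hgpos i)
  -- summability of positive parts
  have hsum' : Summable (fun i => max (g i - 1) 0) :=
    (summable_nat_add_iff 1).mpr hsum
  have hdiv' : ¬ Summable (fun i => max (1 - g i) 0) :=
    fun h => hdiv ((summable_nat_add_iff 1).mp h)
  have hlogsum : Summable (fun i => max (Real.log (g i)) 0) := by
    apply Summable.of_nonneg_of_le (fun i => le_max_right _ _) (fun i => ?_) hsum'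
    exact max_le_max (Real.log_le_sub_one_of_pos (hgpos i)) le_rfl
  set C : ℝ := ∑' i, max (Real.log (g i)) 0 with hCdef
  have hCle : ∀ m, ∑ i ∈ Finset.range m, max (Real.log (g i)) 0 ≤ C :=
    fun m => Summable.sum_le_tsum _ (fun i _ => le_max_right _ _) hlogsum
  -- divergence of negative parts
  have hnegdiv : Tendsto (fun m => ∑ i ∈ Finset.range m, max (- Real.log (g i)) 0)
      atTop atTop := by
    have h1 : Tendsto (fun m => ∑ i ∈ Finset.range m, max (1 - g i) 0) atTop atTop :=
      (not_summable_iff_tendsto_nat_atTop_of_nonneg (fun i => le_max_right _ _)).mp hdiv'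
    apply tendsto_atTop_mono _ h1
    intro m
    apply Finset.sum_le_sum
    intro i _
    have := Real.log_le_sub_one_of_pos (hgpos i)
    exact max_le_max (by linarith) le_rfl
  -- log Q tends to -infinity
  have hlogQ : Tendsto (fun m => Real.log (Q m)) atTop atBot := by
    have hrw : ∀ m, Real.log (Q m) =
        (∑ i ∈ Finset.range m, max (Real.log (g i)) 0)
        - ∑ i ∈ Finset.range m, max (- Real.log (g i)) 0 := by
      intro m
      rw [Real.log_prod (fun i _ => (hgpos i).ne'), ← Finset.sum_sub_distrib]
      apply Finset.sum_congr rfl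
      intro i _
      rcases le_total 0 (Real.log (g i)) with h | h
      · rw [max_eq_left h, max_eq_right (neg_nonpos.mpr h)]; ring
      · rw [max_eq_right h, max_eq_left (neg_nonneg.mpr h)]; ring
    have h2 : Tendsto (fun m => C + -(∑ i ∈ Finset.range m, max (- Real.log (g i)) 0))
        atTop atBot :=
      tendsto_atBot_add_const_left _ C (tendsto_neg_atBot_iff.mpr hnegdiv)
    apply tendsto_atBot_mono _ h2
    intro m
    rw [hrw m]
    have := hCle m
    linarith
  have hQ0 : Tendsto Q atTop (nhds 0) := by
    have h := Real.tendsto_exp_atBot.comp hlogQ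
    exact h.congr fun m => Real.exp_log (hQpos m)
  -- definition of A
  have hex : ∀ n : ℕ, ∃ m, (n : ℝ) * Q m ≤ 1 := by
    intro n
    have h1 : Tendsto (fun m => (n : ℝ) * Q m) atTop (nhds 0) := by
      simpa using hQ0.const_mul (n : ℝ)
    exact (h1.eventually_le_const (by norm_num : (0:ℝ) < 1)).exists
  set A : ℕ → ℕ := fun n => Nat.find (hex n) with hAdef
  have hA1 : ∀ n : ℕ, (n : ℝ) * Q (A n) ≤ 1 := fun n => Nat.find_spec (hex n)
  have hAmin : ∀ n m, m < A n → 1 < (n : ℝ) * Q m := by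
    intro n m h
    have := Nat.find_min (hex n) h
    push_neg at this
    exact this
  have hAmono : Monotone A := by
    intro a b hab
    apply Nat.find_min'
    calc (a : ℝ) * Q (A b) ≤ (b : ℝ) * Q (A b) :=
          mul_le_mul_of_nonneg_right (Nat.cast_le.mpr hab) (hQpos _).le
      _ ≤ 1 := hA1 b
  have hAtop : Tendsto A atTop atTop := by
    rw [tendsto_atTop_atTop]
    intro b
    rcases Nat.eq_zero_or_pos b with rfl | hb
    · exact ⟨0, fun n _ => Nat.zero_le _⟩
    · set ε : ℝ := (Finset.range b).inf' (by simpa using hb.ne') Q with hεdef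
      have hε : 0 < ε := by
        rw [hεdef, Finset.lt_inf'_iff]
        exact fun m _ => hQpos m
      obtain ⟨N, hN⟩ := exists_nat_gt (1 / ε)
      have h1 : 1 < (N : ℝ) * ε := by
        rw [div_lt_iff₀ hε] at hN
        exact hN
      refine ⟨N, fun n hn => ?_⟩
      by_contra hcon
      push_neg at hcon
      have h2 : ε ≤ Q (A n) := Finset.inf'_le _ (Finset.mem_range.mpr hcon)
      have h3 : (N : ℝ) ≤ n := Nat.cast_le.mpr hn
      have h4 := hA1 n
      nlinarith [hQpos (A n)]
  refine ⟨A, hAmono, hAtop, ?_⟩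
  have key : ∀ n : ℕ, 2 ≤ n → fbar (A n) ≤ (n : ℝ) * Q (A n) := by
    intro n hn
    have hApos : 0 < A n := by
      rcases Nat.eq_zero_or_pos (A n) with h0 | h
      · exfalso
        have := hA1 n
        rw [h0, show Q 0 = 1 from Finset.prod_range_zero g, mul_one] at this
        have : (2 : ℝ) ≤ n := by exact_mod_cast hn
        linarith
      · exact h
    obtain ⟨k, hk⟩ : ∃ k, A n = k + 1 := ⟨A n - 1, (Nat.succ_pred_eq_of_pos hApos).symm⟩
    have hmin : 1 < (n : ℝ) * Q k := hAmin n k (by omega)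
    have hQs : Q (k + 1) = Q k * g k := Finset.prod_range_succ g k
    rw [hk, hQs, ← mul_assoc]
    exact le_mul_of_one_le_left (hgpos k).le hmin.le
  have hgoal : Tendsto (fun n : ℕ => (n : ℝ) * Q (A n)) atTop (nhds 1) := by
    apply tendsto_of_tendsto_of_tendsto_of_le_of_le' (hlim.comp hAtop) tendsto_const_nhds
    · filter_upwards [eventually_ge_atTop 2] with n hn
      exact key n hn
    · filter_upwards with n
      exact hA1 n
  have heq : (fun n : ℕ => (n : ℝ) * ∏ j ∈ Finset.Icc 1 (A n), fbar j)
      = fun n : ℕ => (n : ℝ) * Q (A n) := funext fun n => by rw [hPQ]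
  rw [heq]
  exact hgoal
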